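/- For every partition λ ⊆ δ_n, the number of cells x ∈ λ with l(x) ≤ a(x) ≤ l(x)+1 equals the number of admissible ordered pairs (x,y) of cells of the vertical strip (λ+(1^n))/λ (equivalently, equals dinv of the super tableau of shape (λ+(1^n))/λ all of whose entries equal the negative letter 1̄, so that every admissible pair is a d-inversion). -/

import Mathlib

open Classical

namespace HHL

/-- `d_m` of a cell `(i, j)` is `m*i + j`. -/
def dm (m : ℕ) (x : ℕ × ℕ) : ℕ := m * x.1 + x.2

/-- The reverse diagonal lexicographic order `x <_d y`. -/
def dLess (m : ℕ) (x y : ℕ × ℕ) : Prop :=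
  dm m y < dm m x ∨ (dm m x = dm m y ∧ x.2 < y.2)

/-- The number of d-inversions contributed by a pair of entries with the smaller
entry at the cell `x = (i,j)` and the larger entry at the cell `y = (i',j')`:
`max (0, m - |d_m(y) - d_m(x)|)` if `j > j'`, and
`max (0, m - |d_m(y) - d_m(x) - 1|)` if `j < j'`. -/
def contrib (m : ℕ) (x y : ℕ × ℕ) : ℕ :=
  if y.2 < x.2 then ((m : ℤ) - |(dm m y : ℤ) - (dm m x : ℤ)|).toNat
  else if x.2 < y.2 then ((m : ℤ) - |(dm m y : ℤ) - (dm m x : ℤ) - 1|).toNat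
  else 0

/-- `lam` is (the row-length function of) a partition with at most `n` parts whose
Young diagram is contained in the staircase `m·δ_n = (m(n-1), m(n-2), …, m, 0)`. -/
def IsShape (m n : ℕ) (lam : Fin n → ℕ) : Prop :=
  (∀ i j : Fin n, i ≤ j → lam j ≤ lam i) ∧
  ∀ i : Fin n, lam i ≤ m * (n - 1 - (i : ℕ))

/-- The cell `x_i = (i, λ_{i+1})` of the vertical strip `(λ+(1^n))/λ`. -/
def cell {n : ℕ} (lam : Fin n → ℕ) (i : Fin n) : ℕ × ℕ := ((i : ℕ), lam i)

/-- The cells `x_i` and `x_j` are (consecutive cells) in the same column. -/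
def SameCol {n : ℕ} (lam : Fin n → ℕ) (i j : Fin n) : Prop :=
  (i : ℕ) + 1 = (j : ℕ) ∧ lam i = lam j

/-- A semistandard tableau of the vertical strip `(λ+(1^n))/λ`: entries are
positive integers, strictly increasing up each column. -/
def IsSSYT {n : ℕ} (lam : Fin n → ℕ) (T : Fin n → ℕ) : Prop :=
  (∀ i, 1 ≤ T i) ∧ ∀ i j : Fin n, SameCol lam i j → T i < T j

/-- `T` has content `μ`: there are `μ_a` entries equal to `a` (the list `μ` is
indexed from `0`, so `μ.getD (a-1) 0` is the multiplicity of the letter `a ≥ 1`). -/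
def HasContent {n : ℕ} (T : Fin n → ℕ) (μ : List ℕ) : Prop :=
  ∀ a : ℕ, Set.ncard {i : Fin n | T i = a + 1} = μ.getD a 0

/-- An admissible ordered pair of cells `(x, y)`, `x = (i,j)`, `y = (i',j')`:
either (i) `d(y) = d(x)` and `j > j'`, or (ii) `d(y) = d(x) + 1` and `j < j'`. -/
def Admissible (x y : ℕ × ℕ) : Prop :=
  (y.1 + y.2 = x.1 + x.2 ∧ y.2 < x.2) ∨ (y.1 + y.2 = x.1 + x.2 + 1 ∧ x.2 < y.2)

/-- The number of d-inversions of a tableau of the vertical strip (`m = 1`):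
admissible pairs of cells `(x,y)` with `T(x) < T(y)`. -/
noncomputable def dinv {n : ℕ} (lam : Fin n → ℕ) (T : Fin n → ℕ) : ℕ :=
  Set.ncard {p : Fin n × Fin n |
    Admissible (cell lam p.1) (cell lam p.2) ∧ T p.1 < T p.2}

/-- The statistic `dinv_m` of a (semistandard) tableau of the vertical strip:
each pair of unequal entries contributes `contrib` with the smaller entry first;
each pair of equal entries contributes as would a pair of unequal entries with
the smaller entry at the `<_d`-smaller of the two cells. -/
noncomputable def dinvm (m : ℕ) {n : ℕ} (lam : Fin n → ℕ) (T : Fin n → ℕ) : ℕ :=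
  ∑ p : Fin n × Fin n,
    if T p.1 < T p.2 then contrib m (cell lam p.1) (cell lam p.2)
    else if T p.1 = T p.2 ∧ p.1 < p.2 then
      (if dLess m (cell lam p.1) (cell lam p.2) then
        contrib m (cell lam p.1) (cell lam p.2)
      else contrib m (cell lam p.2) (cell lam p.1))
    else 0

/-- A standard tableau of the vertical strip: a semistandard tableau which is a
bijection onto `{1, …, n}`. -/
def IsStandard {n : ℕ} (lam : Fin n → ℕ) (S : Fin n → ℕ) : Prop :=
  IsSSYT lam S ∧ Function.Injective S ∧ ∀ i, S i ≤ n

/-- The set of d-descents of a standard tableau `S`: letters `a` such that the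
cells `x`, `y` with `S(x) = a`, `S(y) = a + 1` satisfy `x >_d y`. -/
def ddSet (m : ℕ) {n : ℕ} (lam : Fin n → ℕ) (S : Fin n → ℕ) : Set ℕ :=
  {a | ∃ i j : Fin n, S i = a ∧ S j = a + 1 ∧ dLess m (cell lam j) (cell lam i)}


/-- The part `λ'_j` of the conjugate partition: the number of rows of `λ`
of length at least `j`. -/
noncomputable def conjPart {n : ℕ} (lam : Fin n → ℕ) (j : ℕ) : ℕ :=
  Set.ncard {i : Fin n | j ≤ lam i}

/-- `b(λ) = dinv(λ)`: the number of cells `x ∈ λ` with `l(x) ≤ a(x) ≤ l(x)+1`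
equals the number of admissible ordered pairs of cells of the vertical strip
`(λ+(1^n))/λ` (that is, the `dinv` of the all-`1̄` super tableau, for which
every admissible pair is a d-inversion). -/

lemma card_filter_P (t a c : ℕ) :
    ((Finset.Ico a c).filter (fun v => v = t ∨ v + 1 = t)).card
      = (if a ≤ t ∧ t < c then 1 else 0) + (if a + 1 ≤ t ∧ t < c + 1 then 1 else 0) := by
  classical
  rw [Finset.filter_or, Finset.card_union_of_disjoint]
  · rw [Finset.filter_eq']
    have h2 : (Finset.Ico a c).filter (fun v => v + 1 = t)
        = if t = 0 then (∅ : Finset ℕ) else if t - 1 ∈ Finset.Ico a c then {t - 1} else ∅ := by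
      rcases t with _ | s
      · simp
      · simp only [if_neg (Nat.succ_ne_zero s)]
        have : (fun v => v + 1 = s + 1) = (fun v => v = s) := by
          funext v; simp [Nat.succ_inj]
        rw [show ((s+1) - 1) = s from rfl, ← Finset.filter_eq' (Finset.Ico a c) s]
        congr 1
    rw [h2]
    simp only [Finset.mem_Ico]
    split_ifs <;> simp_all <;> omega
  · rw [Finset.disjoint_left]
    intro v hv hv'
    simp only [Finset.mem_filter] at hv hv'
    omega

lemma ncard_Iic {n : ℕ} (i : Fin n) : Set.ncard (Set.Iic i) = (i : ℕ) + 1 := by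
  rw [← Finset.coe_Iic, Set.ncard_coe_finset, Fin.card_Iic]

lemma conj_ge {n : ℕ} (lam : Fin n → ℕ)
    (hmono : ∀ i j : Fin n, i ≤ j → lam j ≤ lam i) (i : Fin n) (j : ℕ)
    (hj : j + 1 ≤ lam i) : (i : ℕ) + 1 ≤ conjPart lam (j + 1) := by
  have hsub : Set.Iic i ⊆ {i' : Fin n | j + 1 ≤ lam i'} := by
    intro i' hi'
    exact le_trans hj (hmono i' i hi')
  calc (i : ℕ) + 1 = Set.ncard (Set.Iic i) := (ncard_Iic i).symm
    _ ≤ _ := Set.ncard_le_ncard hsub (Set.toFinite _)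

lemma conj_eq_of {n : ℕ} (lam : Fin n → ℕ)
    (hmono : ∀ i j : Fin n, i ≤ j → lam j ≤ lam i) (i₀ : Fin n) (j : ℕ)
    (hlow : j + 1 ≤ lam i₀) (hhigh : ∀ i : Fin n, i₀ < i → lam i ≤ j) :
    conjPart lam (j + 1) = (i₀ : ℕ) + 1 := by
  have hset : {i : Fin n | j + 1 ≤ lam i} = Set.Iic i₀ := by
    ext i
    simp only [Set.mem_setOf_eq, Set.mem_Iic]
    constructor
    · intro h
      by_contra hlt
      push_neg at hlt
      exact absurd h (by have := hhigh i hlt; omega)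
    · intro h
      exact le_trans hlow (hmono i i₀ h)
  rw [conjPart, hset, ncard_Iic]


lemma key {n : ℕ} (lam : Fin n → ℕ)
    (hmono : ∀ i j : Fin n, i ≤ j → lam j ≤ lam i)
    (hbd : ∀ i : Fin n, (i : ℕ) + lam i + 1 ≤ n)
    (t : ℕ) (ht : t + 1 ≤ n) :
    ∀ m : ℕ, ∀ i₀ : Fin n, (i₀ : ℕ) + m + 1 = n →
    (Finset.univ.filter fun i : Fin n =>
        i₀ < i ∧ ((i:ℕ) + lam i = t ∨ (i:ℕ) + lam i + 1 = t)).card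
      = ((Finset.range (lam i₀)).filter fun j =>
          (j + conjPart lam (j+1) = t ∨ j + conjPart lam (j+1) + 1 = t)).card
        + min 2 (t - ((i₀:ℕ) + lam i₀)) := by
  intro m
  induction m with
  | zero =>
    intro i₀ h
    have hl0 : lam i₀ = 0 := by have := hbd i₀; omega
    have h1 : (Finset.univ.filter fun i : Fin n =>
        i₀ < i ∧ ((i:ℕ) + lam i = t ∨ (i:ℕ) + lam i + 1 = t)) = ∅ := by
      apply Finset.filter_eq_empty_iff.mpr
      intro i _
      have hi : (i : ℕ) < n := i.isLt
      have : ¬ (i₀ < i) := by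
        rw [Fin.lt_def]; omega
      tauto
    rw [h1, hl0]
    simp only [Finset.card_empty, Finset.range_zero, Finset.filter_empty]
    omega
  | succ m ih =>
    intro i₀ h
    have hi1n : (i₀ : ℕ) + 1 < n := by omega
    set i₁ : Fin n := ⟨(i₀ : ℕ) + 1, hi1n⟩ with hi₁
    have hv1 : (i₁ : ℕ) = (i₀ : ℕ) + 1 := rfl
    have hle01 : i₀ ≤ i₁ := by rw [Fin.le_def]; omega
    have hlamle : lam i₁ ≤ lam i₀ := hmono i₀ i₁ hle01
    set a : ℕ := (i₁ : ℕ) + lam i₁ with ha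
    set b : ℕ := (i₀ : ℕ) + lam i₀ with hb
    have hab : a ≤ b + 1 := by omega
    have IH := ih i₁ (by omega)
    -- row split
    have hrow : (Finset.univ.filter fun i : Fin n =>
          i₀ < i ∧ ((i:ℕ) + lam i = t ∨ (i:ℕ) + lam i + 1 = t)).card
        = (Finset.univ.filter fun i : Fin n =>
          i₁ < i ∧ ((i:ℕ) + lam i = t ∨ (i:ℕ) + lam i + 1 = t)).card
          + (if (a = t ∨ a + 1 = t) then 1 else 0) := by
      by_cases hP : (a = t ∨ a + 1 = t)
      · rw [if_pos hP]
        have hins : (Finset.univ.filter fun i : Fin n =>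
              i₀ < i ∧ ((i:ℕ) + lam i = t ∨ (i:ℕ) + lam i + 1 = t))
            = insert i₁ (Finset.univ.filter fun i : Fin n =>
              i₁ < i ∧ ((i:ℕ) + lam i = t ∨ (i:ℕ) + lam i + 1 = t)) := by
          ext i
          simp only [Finset.mem_insert, Finset.mem_filter, Finset.mem_univ, true_and,
            Fin.lt_def, hv1]
          constructor
          · rintro ⟨h1, h2⟩
            rcases Nat.lt_or_ge ((i₀:ℕ)+1) (i:ℕ) with h3 | h3
            · exact Or.inr ⟨h3, h2⟩
            · left; apply Fin.ext; omega
          · rintro (rfl | ⟨h1, h2⟩)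
            · exact ⟨by omega, hP⟩
            · exact ⟨by omega, h2⟩
        rw [hins, Finset.card_insert_of_notMem (by simp)]
      · rw [if_neg hP, Nat.add_zero]
        congr 1
        ext i
        simp only [Finset.mem_filter, Finset.mem_univ, true_and, Fin.lt_def, hv1]
        constructor
        · rintro ⟨h1, h2⟩
          refine ⟨?_, h2⟩
          rcases Nat.lt_or_ge ((i₀:ℕ)+1) (i:ℕ) with h3 | h3
          · exact h3
          · exfalso
            have : (i:ℕ) = (i₀:ℕ) + 1 := by omega
            have hieq : i = i₁ := Fin.ext this
            subst hieq
            exact hP h2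
        · rintro ⟨h1, h2⟩; exact ⟨by omega, h2⟩
    -- column split
    have hcol : ((Finset.range (lam i₀)).filter fun j =>
          (j + conjPart lam (j+1) = t ∨ j + conjPart lam (j+1) + 1 = t)).card
        = ((Finset.range (lam i₁)).filter fun j =>
          (j + conjPart lam (j+1) = t ∨ j + conjPart lam (j+1) + 1 = t)).card
          + ((Finset.Ico (lam i₁) (lam i₀)).filter fun j =>
          (j + conjPart lam (j+1) = t ∨ j + conjPart lam (j+1) + 1 = t)).card := by
      have hsplit : Finset.range (lam i₀)
          = Finset.range (lam i₁) ∪ Finset.Ico (lam i₁) (lam i₀) := by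
        rw [Finset.range_eq_Ico, Finset.range_eq_Ico,
          Finset.Ico_union_Ico_eq_Ico (Nat.zero_le _) hlamle]
      rw [hsplit, Finset.filter_union, Finset.card_union_of_disjoint]
      rw [Finset.disjoint_left]
      intro j hj hj'
      simp only [Finset.mem_filter, Finset.mem_range, Finset.mem_Ico] at hj hj'
      omega
    -- Ico part
    have hconj : ∀ j ∈ Finset.Ico (lam i₁) (lam i₀), conjPart lam (j+1) = (i₀:ℕ)+1 := by
      intro j hj
      rw [Finset.mem_Ico] at hj
      apply conj_eq_of lam hmono i₀ j (by omega)
      intro i hi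
      have hle : i₁ ≤ i := by rw [Fin.le_def, hv1]; rw [Fin.lt_def] at hi; omega
      exact le_trans (hmono i₁ i hle) hj.1
    have hIco : ((Finset.Ico (lam i₁) (lam i₀)).filter fun j =>
          (j + conjPart lam (j+1) = t ∨ j + conjPart lam (j+1) + 1 = t)).card
        = ((Finset.Ico a (b+1)).filter (fun v => v = t ∨ v + 1 = t)).card := by
      rw [← Finset.card_image_of_injective _ (add_left_injective ((i₀:ℕ)+1))]
      congr 1
      ext v
      simp only [Finset.mem_image, Finset.mem_filter, Finset.mem_Ico]
      constructor
      · rintro ⟨j, ⟨hj, hQ⟩, rfl⟩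
        rw [hconj j (by rw [Finset.mem_Ico]; exact hj)] at hQ
        constructor
        · omega
        · omega
      · rintro ⟨hv, hPt⟩
        refine ⟨v - ((i₀:ℕ)+1), ⟨⟨by omega, by omega⟩, ?_⟩, by omega⟩
        rw [hconj (v - ((i₀:ℕ)+1)) (by rw [Finset.mem_Ico]; omega)]
        omega
    rw [hrow, IH, hcol, hIco, card_filter_P]
    have hbd0 := hbd i₀
    split_ifs <;> omega


theorem statement9 (n : ℕ) (hn : 1 ≤ n) (lam : Fin n → ℕ) (hlam : IsShape 1 n lam) :
    Set.ncard {x : ℕ × ℕ | ∃ i : Fin n, (i : ℕ) = x.1 ∧ x.2 < lam i ∧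
      conjPart lam (x.2 + 1) - 1 - x.1 ≤ lam i - 1 - x.2 ∧
      lam i - 1 - x.2 ≤ (conjPart lam (x.2 + 1) - 1 - x.1) + 1} =
    Set.ncard {p : Fin n × Fin n | Admissible (cell lam p.1) (cell lam p.2)} := by
  classical
  obtain ⟨hmono, hbd'⟩ := hlam
  have hbd : ∀ i : Fin n, (i : ℕ) + lam i + 1 ≤ n := by
    intro i
    have h1 := hbd' i
    have h2 := i.isLt
    rw [one_mul] at h1
    omega
  -- the column-side finset
  set U : Finset (ℕ × ℕ) := Finset.univ.biUnion (fun i : Fin n =>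
    ((Finset.range (lam i)).filter fun j =>
      (j + conjPart lam (j+1) = (i:ℕ) + lam i ∨
        j + conjPart lam (j+1) + 1 = (i:ℕ) + lam i)).image
      (fun j => ((i:ℕ), j))) with hU
  -- the row-side finset
  set V : Finset (Fin n × Fin n) := Finset.univ.biUnion (fun i₀ : Fin n =>
    (Finset.univ.filter fun i : Fin n => i₀ < i ∧
      ((i:ℕ) + lam i = (i₀:ℕ) + lam i₀ ∨ (i:ℕ) + lam i + 1 = (i₀:ℕ) + lam i₀)).image
      (fun i : Fin n => if (i:ℕ) + lam i = (i₀:ℕ) + lam i₀ then (i₀, i) else (i, i₀))) with hV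
  -- LHS set equality
  have hAset : {x : ℕ × ℕ | ∃ i : Fin n, (i : ℕ) = x.1 ∧ x.2 < lam i ∧
      conjPart lam (x.2 + 1) - 1 - x.1 ≤ lam i - 1 - x.2 ∧
      lam i - 1 - x.2 ≤ (conjPart lam (x.2 + 1) - 1 - x.1) + 1} = ↑U := by
    ext x
    rw [Finset.mem_coe, hU]
    simp only [Set.mem_setOf_eq, Finset.mem_biUnion, Finset.mem_image,
      Finset.mem_filter, Finset.mem_range, Finset.mem_univ, true_and]
    constructor
    · rintro ⟨i, hx1, hx2, hc1, hc2⟩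
      have hge := conj_ge lam hmono i x.2 hx2
      refine ⟨i, x.2, ⟨hx2, ?_⟩, ?_⟩
      · rw [← hx1] at hc1 hc2
        omega
      · rw [hx1]
    · rintro ⟨i, j, ⟨hj, hc⟩, rfl⟩
      have hge := conj_ge lam hmono i j hj
      refine ⟨i, rfl, hj, ?_, ?_⟩ <;> dsimp only <;> omega
  -- RHS set equality
  have hBset : {p : Fin n × Fin n | Admissible (cell lam p.1) (cell lam p.2)} = ↑V := by
    ext p
    rw [Finset.mem_coe, hV]
    simp only [Set.mem_setOf_eq, Finset.mem_biUnion, Finset.mem_image,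
      Finset.mem_filter, Finset.mem_univ, true_and, Admissible, cell]
    constructor
    · rintro (⟨he, hlt⟩ | ⟨he, hlt⟩)
      · -- type (i): p.1 < p.2
        have hplt : p.1 < p.2 := by
          by_contra hc
          push_neg at hc
          exact absurd (hmono p.2 p.1 hc) (by omega)
        exact ⟨p.1, p.2, ⟨hplt, Or.inl he⟩, by rw [if_pos he]⟩

      · -- type (ii): p.2 < p.1
        have hplt : p.2 < p.1 := by
          by_contra hc
          push_neg at hc
          exact absurd (hmono p.1 p.2 hc) (by omega)
        refine ⟨p.2, p.1, ⟨hplt, Or.inr he.symm⟩, ?_⟩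
        rw [if_neg (by omega)]
    · rintro ⟨i₀, i, ⟨hlt, hD⟩, rfl⟩
      rw [Fin.lt_def] at hlt
      by_cases hif : (i:ℕ) + lam i = (i₀:ℕ) + lam i₀
      · rw [if_pos hif]
        dsimp only
        exact Or.inl ⟨hif, by omega⟩
      · rw [if_neg hif]
        dsimp only
        rcases hD with hD | hD
        · exact absurd hD hif
        · exact Or.inr ⟨by omega, by omega⟩
  -- cardinalities via biUnion
  have hUcard : U.card = ∑ i : Fin n, ((Finset.range (lam i)).filter fun j =>
      (j + conjPart lam (j+1) = (i:ℕ) + lam i ∨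
        j + conjPart lam (j+1) + 1 = (i:ℕ) + lam i)).card := by
    rw [hU, Finset.card_biUnion]
    · refine Finset.sum_congr rfl fun i _ => ?_
      refine Finset.card_image_of_injective _ ?_
      intro j j' hjj
      simpa using hjj
    · intro x _ y _ hxy
      simp only [Function.onFun]
      rw [Finset.disjoint_left]
      rintro q hqx hqy
      simp only [Finset.mem_image, Finset.mem_filter] at hqx hqy
      obtain ⟨j, _, rfl⟩ := hqx
      obtain ⟨j', _, he⟩ := hqy
      rw [Prod.mk.injEq] at he
      exact hxy (Fin.ext he.1.symm)
  have hVcard : V.card = ∑ i₀ : Fin n, (Finset.univ.filter fun i : Fin n => i₀ < i ∧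
      ((i:ℕ) + lam i = (i₀:ℕ) + lam i₀ ∨ (i:ℕ) + lam i + 1 = (i₀:ℕ) + lam i₀)).card := by
    rw [hV, Finset.card_biUnion]
    · refine Finset.sum_congr rfl fun i₀ _ => ?_
      apply Finset.card_image_of_injOn
      intro i hi i' hi' he
      simp only [Finset.mem_coe, Finset.mem_filter, Finset.mem_univ, true_and] at hi hi'
      dsimp only at he
      have l1 := hi.1
      have l2 := hi'.1
      rw [Fin.lt_def] at l1 l2
      split_ifs at he with h1 h2 h3 <;>
      · rw [Prod.mk.injEq] at he
        obtain ⟨e1, e2⟩ := he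
        rw [Fin.ext_iff] at e1 e2
        apply Fin.ext
        omega
    · intro x _ y _ hxy
      simp only [Function.onFun]
      rw [Finset.disjoint_left]
      rintro q hqx hqy
      simp only [Finset.mem_image, Finset.mem_filter, Finset.mem_univ, true_and] at hqx hqy
      obtain ⟨i, ⟨hxi, _⟩, hqe⟩ := hqx
      obtain ⟨i', ⟨hyi, _⟩, hqe'⟩ := hqy
      apply hxy
      have hx' : (q.1 = x ∧ q.1 < q.2) ∨ (q.2 = x ∧ q.2 < q.1) := by
        split_ifs at hqe
        · subst hqe; exact Or.inl ⟨rfl, hxi⟩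
        · subst hqe; exact Or.inr ⟨rfl, hxi⟩
      have hy' : (q.1 = y ∧ q.1 < q.2) ∨ (q.2 = y ∧ q.2 < q.1) := by
        split_ifs at hqe'
        · subst hqe'; exact Or.inl ⟨rfl, hyi⟩
        · subst hqe'; exact Or.inr ⟨rfl, hyi⟩
      rcases hx' with ⟨h1, h2⟩ | ⟨h1, h2⟩ <;> rcases hy' with ⟨h3, h4⟩ | ⟨h3, h4⟩
      · rw [← h1, ← h3]
      · exact absurd (h4.trans h2) (lt_irrefl _)
      · exact absurd (h2.trans h4) (lt_irrefl _)
      · rw [← h1, ← h3]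
  -- conclude
  rw [hAset, hBset, Set.ncard_coe_finset, Set.ncard_coe_finset, hUcard, hVcard]
  refine (Finset.sum_congr rfl fun i _ => ?_).symm
  have hk := key lam hmono hbd ((i:ℕ) + lam i) (hbd i) (n - 1 - (i:ℕ)) i
    (by have := i.isLt; omega)
  simpa using hk


end HHL
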